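/- Let E be a finite set, d ≥ 1, and let φ be a generic symmetric function on the injective (d+1)-tuples of E. Then for any three distinct elements a, b, c ∈ E one has n_φ(a,b) + n_φ(b,c) + n_φ(a,c) ≡ 0 (mod 2). -/

import Mathlib

open Finset

/-- A function on `d`-tuples is symmetric if it is invariant under all
permutations of the index set. -/
def IsSymmetricFn {E : Type*} {d : ℕ} (φ : (Fin d → E) → ℝ) : Prop :=
  ∀ (x : Fin d → E) (σ : Equiv.Perm (Fin d)), φ (x ∘ σ) = φ x

/-- A function on `d`-tuples is antisymmetric if permuting the entries by `σ`
multiplies the value by `sign σ`. -/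
def IsAntisymmetricFn {E : Type*} {d : ℕ} (φ : (Fin d → E) → ℝ) : Prop :=
  ∀ (x : Fin d → E) (σ : Equiv.Perm (Fin d)),
    φ (x ∘ σ) = ((Equiv.Perm.sign σ : ℤ) : ℝ) * φ x

/-- A function on `d`-tuples is generic if it does not vanish on any injective tuple. -/
def IsGenericFn {E : Type*} {d : ℕ} (φ : (Fin d → E) → ℝ) : Prop :=
  ∀ x : Fin d → E, Function.Injective x → φ x ≠ 0

/-- A `d`-element subset `s` (not containing `a`, `b`) separates `a` from `b`
with respect to `φ` if `φ(x₁,…,x_d,a) * φ(x₁,…,x_d,b) < 0` for some (equivalently,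
for symmetric or antisymmetric `φ`, any) enumeration `x` of `s`. -/
def Separates {E : Type*} [DecidableEq E] {d : ℕ} (φ : (Fin (d + 1) → E) → ℝ)
    (s : Finset E) (a b : E) : Prop :=
  ∃ x : Fin d → E, Function.Injective x ∧ Finset.image x Finset.univ = s ∧
    φ (Fin.snoc x a) * φ (Fin.snoc x b) < 0

/-- `sepCount φ a b` is the number `n_φ(a,b)` of `d`-subsets of `E \ {a,b}`
separating `a` from `b`. -/
noncomputable def sepCount {E : Type*} [DecidableEq E] {d : ℕ}
    (φ : (Fin (d + 1) → E) → ℝ) (a b : E) : ℕ :=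
  Set.ncard {s : Finset E | s.card = d ∧ a ∉ s ∧ b ∉ s ∧ Separates φ s a b}

/-- The Orchard relation of a generic symmetric function. -/
def OrchardSym {E : Type*} [DecidableEq E] {d : ℕ}
    (φ : (Fin (d + 1) → E) → ℝ) (x y : E) : Prop :=
  x = y ∨ sepCount φ x y % 2 = 0

/-- The Orchard relation of a generic antisymmetric function. -/
def OrchardAnti {E : Type*} [Fintype E] [DecidableEq E] {d : ℕ}
    (φ : (Fin (d + 1) → E) → ℝ) (x y : E) : Prop :=
  x = y ∨ sepCount φ x y % 2 = Nat.choose (Fintype.card E - 3) (d - 1) % 2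

/-- Two generic functions are flip-related with flip set `F` if their product is
negative on tuples enumerating `F` and positive on all other injective tuples. -/
def FlipRelated {E : Type*} [DecidableEq E] {d : ℕ}
    (φ ψ : (Fin (d + 1) → E) → ℝ) (F : Finset E) : Prop :=
  ∀ x : Fin (d + 1) → E, Function.Injective x →
    (Finset.image x Finset.univ = F → φ x * ψ x < 0) ∧
    (Finset.image x Finset.univ ≠ F → 0 < φ x * ψ x)

/-- `Rmap φ (x₁,…,x_d) = ∏_{x ∈ E∖{x₁,…,x_d}} φ(x,x₁,…,x_d)`. -/
noncomputable def Rmap {E : Type*} [Fintype E] [DecidableEq E] {d : ℕ}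
    (φ : (Fin (d + 1) → E) → ℝ) : (Fin d → E) → ℝ :=
  fun x => ∏ y ∈ Finset.univ \ Finset.image x Finset.univ, φ (Fin.cons y x)

/-- `Amap φ (x₀,…,x_{d+1}) = ∏_{i=0}^{d+1} φ(x₀,…,x_{i-1},x_{i+1},…,x_{d+1})`. -/
noncomputable def Amap {E : Type*} {d : ℕ}
    (φ : (Fin (d + 1) → E) → ℝ) : (Fin (d + 2) → E) → ℝ :=
  fun x => ∏ i : Fin (d + 2), φ (x ∘ Fin.succAbove i)

/-- `muCount φ x` is the number of `d`-subsets `{x₁,…,x_d} ⊆ E∖{x}` with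
`φ(x,x₁,…,x_d) > 0`. -/
noncomputable def muCount {E : Type*} [DecidableEq E] {d : ℕ}
    (φ : (Fin (d + 1) → E) → ℝ) (x : E) : ℕ :=
  Set.ncard {s : Finset E | s.card = d ∧ x ∉ s ∧
    ∃ t : Fin d → E, Function.Injective t ∧ Finset.image t Finset.univ = s ∧
      0 < φ (Fin.cons x t)}

open Function


lemma snoc_inj {E : Type*} {n : ℕ} {x : Fin n → E} {p : E}
    (hx : Injective x) (hp : p ∉ Set.range x) :
    Injective (Fin.snoc x p : Fin (n+1) → E) := by
  intro i j hij
  induction i using Fin.lastCases with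
  | last =>
    induction j using Fin.lastCases with
    | last => rfl
    | cast j =>
      simp [Fin.snoc_last, Fin.snoc_castSucc] at hij
      exact absurd ⟨j, hij.symm⟩ hp
  | cast i =>
    induction j using Fin.lastCases with
    | last =>
      simp [Fin.snoc_last, Fin.snoc_castSucc] at hij
      exact absurd ⟨i, hij⟩ hp
    | cast j =>
      simp only [Fin.snoc_castSucc] at hij
      exact congrArg Fin.castSucc (hx hij)

lemma image_snoc {E : Type*} [DecidableEq E] {n : ℕ} (x : Fin n → E) (p : E) :
    Finset.image (Fin.snoc x p : Fin (n+1) → E) Finset.univ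
      = insert p (Finset.image x Finset.univ) := by
  ext e
  simp only [mem_image, mem_insert, mem_univ, true_and]
  constructor
  · rintro ⟨i, rfl⟩
    induction i using Fin.lastCases with
    | last => left; simp
    | cast i => right; exact ⟨i, by simp⟩
  · rintro (rfl | ⟨i, rfl⟩)
    · exact ⟨Fin.last n, by simp⟩
    · exact ⟨i.castSucc, by simp⟩

lemma symVal {E : Type*} {n : ℕ} [DecidableEq E] {φ : (Fin n → E) → ℝ}
    (hsym : IsSymmetricFn φ) {x y : Fin n → E} (hx : Injective x) (hy : Injective y)
    (h : Finset.image x Finset.univ = Finset.image y Finset.univ) : φ x = φ y := by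
  have hex : ∀ i, ∃ j, y j = x i := by
    intro i
    have hm : x i ∈ Finset.image y Finset.univ := by
      rw [← h]; exact mem_image_of_mem x (mem_univ i)
    simpa [mem_image] using hm
  choose σ hσ using hex
  have hinj : Injective σ := fun i j hij => hx (by rw [← hσ i, ← hσ j, hij])
  have hbij : Bijective σ := Finite.injective_iff_bijective.mp hinj
  have : x = y ∘ (Equiv.ofBijective σ hbij) := by
    funext i; exact (hσ i).symm
  rw [this, hsym y (Equiv.ofBijective σ hbij)]

lemma not_mem_range {E : Type*} [DecidableEq E] {n : ℕ} {z : Fin n → E} {p : E}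
    (h : p ∉ Finset.image z Finset.univ) : p ∉ Set.range z := by
  rintro ⟨i, rfl⟩
  exact h (mem_image_of_mem z (mem_univ i))

lemma snoc2_inj {E : Type*} [DecidableEq E] {n : ℕ} {y : Fin n → E} {p q : E}
    (hy : Injective y) (hp : p ∉ Finset.image y Finset.univ)
    (hq : q ∉ Finset.image y Finset.univ) (hpq : p ≠ q) :
    Injective (Fin.snoc (Fin.snoc y p) q : Fin (n+2) → E) := by
  refine snoc_inj (snoc_inj hy (not_mem_range hp)) (not_mem_range ?_)
  rw [image_snoc]
  simp only [Finset.mem_insert, not_or]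
  exact ⟨Ne.symm hpq, hq⟩

lemma snoc2_swap {E : Type*} [DecidableEq E] {n : ℕ} {φ : (Fin (n+2) → E) → ℝ}
    (hsym : IsSymmetricFn φ) {y : Fin n → E} {p q : E}
    (hy : Injective y) (hp : p ∉ Finset.image y Finset.univ)
    (hq : q ∉ Finset.image y Finset.univ) (hpq : p ≠ q) :
    φ (Fin.snoc (Fin.snoc y p) q) = φ (Fin.snoc (Fin.snoc y q) p) := by
  refine symVal hsym (snoc2_inj hy hp hq hpq) (snoc2_inj hy hq hp hpq.symm) ?_
  rw [image_snoc, image_snoc, image_snoc, image_snoc]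
  exact Finset.insert_comm q p _

lemma exists_enum {E : Type*} [DecidableEq E] {n : ℕ} {s : Finset E} (h : s.card = n) :
    ∃ x : Fin n → E, Injective x ∧ Finset.image x Finset.univ = s := by
  let eqv : Fin n ≃ s := (s.equivFin.trans (finCongr h)).symm
  refine ⟨fun i => (eqv i : E), fun i j hij => eqv.injective (Subtype.ext hij), ?_⟩
  ext u
  simp only [mem_image, mem_univ, true_and]
  constructor
  · rintro ⟨i, rfl⟩; exact (eqv i).2
  · intro hu; exact ⟨eqv.symm ⟨u, hu⟩, by simp⟩

lemma sep_iff {E : Type*} [DecidableEq E] {d : ℕ} {φ : (Fin (d+1) → E) → ℝ}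
    (hsym : IsSymmetricFn φ) {s : Finset E} {a b : E} (ha : a ∉ s) (hb : b ∉ s)
    {x : Fin d → E} (hx : Injective x) (hxs : Finset.image x Finset.univ = s) :
    Separates φ s a b ↔ φ (Fin.snoc x a) * φ (Fin.snoc x b) < 0 := by
  constructor
  · rintro ⟨x', hx', hxs', hlt⟩
    have hea : φ (Fin.snoc x' a) = φ (Fin.snoc x a) := by
      refine symVal hsym (snoc_inj hx' (not_mem_range (hxs' ▸ ha)))
        (snoc_inj hx (not_mem_range (hxs ▸ ha))) ?_
      rw [image_snoc, image_snoc, hxs, hxs']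
    have heb : φ (Fin.snoc x' b) = φ (Fin.snoc x b) := by
      refine symVal hsym (snoc_inj hx' (not_mem_range (hxs' ▸ hb)))
        (snoc_inj hx (not_mem_range (hxs ▸ hb))) ?_
      rw [image_snoc, image_snoc, hxs, hxs']
    rwa [hea, heb] at hlt
  · intro h
    exact ⟨x, hx, hxs, h⟩

lemma card_filter_eq_sum {α : Type*} (s : Finset α) (p : α → Prop) [DecidablePred p] :
    (s.filter p).card = ∑ a ∈ s, if p a then 1 else 0 := by
  rw [Finset.sum_ite, Finset.sum_const_zero, add_zero, Finset.sum_const, smul_eq_mul, mul_one]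

lemma parity3 (u v w : ℝ) (hu : u ≠ 0) (hv : v ≠ 0) (hw : w ≠ 0) :
    2 ∣ ((if u*v < 0 then 1 else 0) + (if v*w < 0 then 1 else 0)
      + (if u*w < 0 then 1 else 0) : ℕ) := by
  have key : ∀ p q : ℝ, 0 < p*q → (if p*q < 0 then (1:ℕ) else 0) = 0 :=
    fun p q h => if_neg (asymm h)
  have key2 : ∀ p q : ℝ, p*q < 0 → (if p*q < 0 then (1:ℕ) else 0) = 1 :=
    fun p q h => if_pos h
  rcases hu.lt_or_gt with h | h <;> rcases hv.lt_or_gt with h' | h' <;>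
    rcases hw.lt_or_gt with h'' | h'' <;>
    (first
    | (rw [key u v (by nlinarith), key v w (by nlinarith), key u w (by nlinarith)])
    | (rw [key2 u v (by nlinarith), key2 v w (by nlinarith), key u w (by nlinarith)])
    | (rw [key2 u v (by nlinarith), key v w (by nlinarith), key2 u w (by nlinarith)])
    | (rw [key u v (by nlinarith), key2 v w (by nlinarith), key2 u w (by nlinarith)])) <;>
    decide

theorem stmt_0 {E : Type*} [Fintype E] [DecidableEq E] (d : ℕ) (hd : 1 ≤ d)
    (hcard : d + 1 ≤ Fintype.card E)
    (φ : (Fin (d + 1) → E) → ℝ)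
    (hgen : IsGenericFn φ) (hsym : IsSymmetricFn φ)
    (a b c : E) (hab : a ≠ b) (hbc : b ≠ c) (hac : a ≠ c) :
    (sepCount φ a b + sepCount φ b c + sepCount φ a c) % 2 = 0 := by
  classical
  obtain ⟨e, rfl⟩ : ∃ e, d = e + 1 := ⟨d - 1, (Nat.succ_pred_eq_of_pos hd).symm⟩
  -- rewrite sepCount as a Finset card
  have hcount : ∀ u v : E, sepCount φ u v =
      (univ.filter (fun s : Finset E =>
        s.card = e + 1 ∧ u ∉ s ∧ v ∉ s ∧ Separates φ s u v)).card := by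
    intro u v
    rw [sepCount]
    have : {s : Finset E | s.card = e + 1 ∧ u ∉ s ∧ v ∉ s ∧ Separates φ s u v}
        = ↑(univ.filter (fun s : Finset E =>
          s.card = e + 1 ∧ u ∉ s ∧ v ∉ s ∧ Separates φ s u v)) := by
      ext s; simp
    rw [this, Set.ncard_coe_finset]
  -- split by membership of the third point
  have hsplit : ∀ u v w : E,
      (univ.filter (fun s : Finset E =>
        s.card = e + 1 ∧ u ∉ s ∧ v ∉ s ∧ Separates φ s u v)).card =
      (univ.filter (fun s : Finset E =>
        (s.card = e + 1 ∧ u ∉ s ∧ v ∉ s ∧ Separates φ s u v) ∧ w ∈ s)).card +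
      (univ.filter (fun s : Finset E =>
        (s.card = e + 1 ∧ u ∉ s ∧ v ∉ s ∧ Separates φ s u v) ∧ w ∉ s)).card := by
    intro u v w
    have h := Finset.card_filter_add_card_filter_not
      (s := univ.filter (fun s : Finset E =>
        s.card = e + 1 ∧ u ∉ s ∧ v ∉ s ∧ Separates φ s u v)) (fun s => w ∈ s)
    rw [Finset.filter_filter, Finset.filter_filter] at h
    exact h.symm
  rw [hcount a b, hcount b c, hcount a c, hsplit a b c, hsplit b c a, hsplit a c b]
  -- the common base sets
  set D : Finset (Finset E) := univ.filter
    (fun s : Finset E => s.card = e + 1 ∧ a ∉ s ∧ b ∉ s ∧ c ∉ s) with hD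
  set T : Finset (Finset E) := univ.filter
    (fun t : Finset E => t.card = e ∧ a ∉ t ∧ b ∉ t ∧ c ∉ t) with hT
  -- A-part : third point not in s
  have hA : ∀ u v w : E, ({a,b,c} : Finset E) = {u,v,w} →
      (univ.filter (fun s : Finset E =>
        (s.card = e + 1 ∧ u ∉ s ∧ v ∉ s ∧ Separates φ s u v) ∧ w ∉ s)).card
      = ∑ s ∈ D, (if Separates φ s u v then 1 else 0) := by
    intro u v w habc
    rw [← card_filter_eq_sum]
    have h1 : ∀ z : E, z ∈ ({u,v,w} : Finset E) ↔ z ∈ ({a,b,c} : Finset E) := by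
      intro z; rw [habc]
    simp only [Finset.mem_insert, Finset.mem_singleton] at h1
    have hiff : ∀ s : Finset E, (u ∉ s ∧ v ∉ s ∧ w ∉ s) ↔ (a ∉ s ∧ b ∉ s ∧ c ∉ s) := by
      intro s
      constructor
      · intro hz
        refine ⟨?_, ?_, ?_⟩ <;> intro hmem
        · rcases (h1 a).mpr (Or.inl rfl) with rfl | rfl | rfl
          exacts [hz.1 hmem, hz.2.1 hmem, hz.2.2 hmem]
        · rcases (h1 b).mpr (Or.inr (Or.inl rfl)) with rfl | rfl | rfl
          exacts [hz.1 hmem, hz.2.1 hmem, hz.2.2 hmem]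
        · rcases (h1 c).mpr (Or.inr (Or.inr rfl)) with rfl | rfl | rfl
          exacts [hz.1 hmem, hz.2.1 hmem, hz.2.2 hmem]
      · intro hz
        refine ⟨?_, ?_, ?_⟩ <;> intro hmem
        · rcases (h1 u).mp (Or.inl rfl) with rfl | rfl | rfl
          exacts [hz.1 hmem, hz.2.1 hmem, hz.2.2 hmem]
        · rcases (h1 v).mp (Or.inr (Or.inl rfl)) with rfl | rfl | rfl
          exacts [hz.1 hmem, hz.2.1 hmem, hz.2.2 hmem]
        · rcases (h1 w).mp (Or.inr (Or.inr rfl)) with rfl | rfl | rfl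
          exacts [hz.1 hmem, hz.2.1 hmem, hz.2.2 hmem]
    congr 1
    ext s
    simp only [hD, Finset.mem_filter, Finset.mem_univ, true_and]
    have := hiff s
    tauto
  -- B-part : third point in s ; biject with T
  have hB : ∀ u v w : E, u ≠ v → u ≠ w → v ≠ w → ({a,b,c} : Finset E) = {u,v,w} →
      (univ.filter (fun s : Finset E =>
        (s.card = e + 1 ∧ u ∉ s ∧ v ∉ s ∧ Separates φ s u v) ∧ w ∈ s)).card
      = ∑ t ∈ T, (if Separates φ (insert w t) u v then 1 else 0) := by
    intro u v w huv huw hvw habc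
    have h1 : ∀ z : E, z ∈ ({u,v,w} : Finset E) ↔ z ∈ ({a,b,c} : Finset E) := by
      intro z; rw [habc]
    simp only [Finset.mem_insert, Finset.mem_singleton] at h1
    rw [← card_filter_eq_sum]
    apply Finset.card_nbij' (fun s => s.erase w) (fun t => insert w t)
    · intro s hs
      simp only [Finset.mem_coe, Finset.mem_filter, Finset.mem_univ, true_and] at hs
      obtain ⟨⟨hcard, hu, hv, hsep⟩, hw⟩ := hs
      have hnot : ∀ z : E, (z = u ∨ z = v ∨ z = w) → z ∉ s.erase w := by
        intro z hz hmem'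
        have hzs := Finset.mem_of_mem_erase hmem'
        have hzw := Finset.ne_of_mem_erase hmem'
        rcases hz with rfl | rfl | rfl
        · exact hu hzs
        · exact hv hzs
        · exact hzw rfl
      simp only [hT, Finset.mem_coe, Finset.mem_filter, Finset.mem_univ, true_and]
      refine ⟨⟨by rw [Finset.card_erase_of_mem hw, hcard]; rfl, ?_, ?_, ?_⟩, ?_⟩
      · exact hnot a ((h1 a).mpr (Or.inl rfl))
      · exact hnot b ((h1 b).mpr (Or.inr (Or.inl rfl)))
      · exact hnot c ((h1 c).mpr (Or.inr (Or.inr rfl)))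
      · rwa [Finset.insert_erase hw]
    · intro t ht
      simp only [hT, Finset.mem_coe, Finset.mem_filter, Finset.mem_univ, true_and] at ht
      obtain ⟨⟨hcard, ha', hb', hc'⟩, hsep⟩ := ht
      have hmem : ∀ z : E, (z = u ∨ z = v ∨ z = w) → z ∉ t := by
        intro z hz
        rcases (h1 z).mp hz with rfl | rfl | rfl
        · exact ha'
        · exact hb'
        · exact hc'
      have hwt : w ∉ t := hmem w (Or.inr (Or.inr rfl))
      simp only [Finset.mem_coe, Finset.mem_filter, Finset.mem_univ, true_and]
      refine ⟨⟨?_, ?_, ?_, hsep⟩, Finset.mem_insert_self w t⟩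
      · rw [Finset.card_insert_of_notMem hwt, hcard]
      · simp only [Finset.mem_insert, not_or]
        exact ⟨huw, hmem u (Or.inl rfl)⟩
      · simp only [Finset.mem_insert, not_or]
        exact ⟨hvw, hmem v (Or.inr (Or.inl rfl))⟩
    · intro s hs
      simp only [Finset.mem_coe, Finset.mem_filter, Finset.mem_univ, true_and] at hs
      exact Finset.insert_erase hs.2
    · intro t ht
      simp only [hT, Finset.mem_coe, Finset.mem_filter, Finset.mem_univ, true_and] at ht
      have hwt : w ∉ t := by
        rcases (h1 w).mp (Or.inr (Or.inr rfl)) with rfl | rfl | rfl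
        · exact ht.1.2.1
        · exact ht.1.2.2.1
        · exact ht.1.2.2.2
      exact Finset.erase_insert hwt
  rw [hA a b c rfl, hA b c a (by ext z; simp; tauto), hA a c b (by ext z; simp; tauto),
    hB a b c hab hac hbc rfl, hB b c a hbc (Ne.symm hab) (Ne.symm hac) (by ext z; simp; tauto),
    hB a c b hac hab (Ne.symm hbc) (by ext z; simp; tauto)]
  -- combine sums
  have hAsum : 2 ∣ (∑ s ∈ D, (if Separates φ s a b then 1 else 0)
      + ∑ s ∈ D, (if Separates φ s b c then 1 else 0)
      + ∑ s ∈ D, (if Separates φ s a c then 1 else 0)) := by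
    rw [← Finset.sum_add_distrib, ← Finset.sum_add_distrib]
    apply Finset.dvd_sum
    intro s hs
    simp only [hD, Finset.mem_filter, Finset.mem_univ, true_and] at hs
    obtain ⟨hcard, ha', hb', hc'⟩ := hs
    obtain ⟨x, hx, hxs⟩ := exists_enum hcard
    rw [sep_iff hsym ha' hb' hx hxs, sep_iff hsym hb' hc' hx hxs,
      sep_iff hsym ha' hc' hx hxs]
    have hna : φ (Fin.snoc x a) ≠ 0 :=
      hgen _ (snoc_inj hx (not_mem_range (hxs ▸ ha')))
    have hnb : φ (Fin.snoc x b) ≠ 0 :=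
      hgen _ (snoc_inj hx (not_mem_range (hxs ▸ hb')))
    have hnc : φ (Fin.snoc x c) ≠ 0 :=
      hgen _ (snoc_inj hx (not_mem_range (hxs ▸ hc')))
    exact parity3 _ _ _ hna hnb hnc
  have hBsum : 2 ∣ (∑ t ∈ T, (if Separates φ (insert c t) a b then 1 else 0)
      + ∑ t ∈ T, (if Separates φ (insert a t) b c then 1 else 0)
      + ∑ t ∈ T, (if Separates φ (insert b t) a c then 1 else 0)) := by
    rw [← Finset.sum_add_distrib, ← Finset.sum_add_distrib]
    apply Finset.dvd_sum
    intro t ht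
    simp only [hT, Finset.mem_filter, Finset.mem_univ, true_and] at ht
    obtain ⟨hcard, ha', hb', hc'⟩ := ht
    obtain ⟨y, hy, hyt⟩ := exists_enum hcard
    have hay : a ∉ Finset.image y Finset.univ := hyt ▸ ha'
    have hby : b ∉ Finset.image y Finset.univ := hyt ▸ hb'
    have hcy : c ∉ Finset.image y Finset.univ := hyt ▸ hc'
    -- enumerations of insert w t
    have himc : Finset.image (Fin.snoc y c : Fin (e+1) → E) Finset.univ = insert c t := by
      rw [image_snoc, hyt]
    have hima : Finset.image (Fin.snoc y a : Fin (e+1) → E) Finset.univ = insert a t := by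
      rw [image_snoc, hyt]
    have himb : Finset.image (Fin.snoc y b : Fin (e+1) → E) Finset.univ = insert b t := by
      rw [image_snoc, hyt]
    have h1 : Separates φ (insert c t) a b ↔
        φ (Fin.snoc (Fin.snoc y c) a) * φ (Fin.snoc (Fin.snoc y c) b) < 0 :=
      sep_iff hsym (by simp only [Finset.mem_insert, not_or]; exact ⟨hac, ha'⟩)
        (by simp only [Finset.mem_insert, not_or]; exact ⟨hbc, hb'⟩)
        (snoc_inj hy (not_mem_range hcy)) himc
    have h2 : Separates φ (insert a t) b c ↔
        φ (Fin.snoc (Fin.snoc y a) b) * φ (Fin.snoc (Fin.snoc y a) c) < 0 :=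
      sep_iff hsym (by simp only [Finset.mem_insert, not_or]; exact ⟨Ne.symm hab, hb'⟩)
        (by simp only [Finset.mem_insert, not_or]; exact ⟨Ne.symm hac, hc'⟩)
        (snoc_inj hy (not_mem_range hay)) hima
    have h3 : Separates φ (insert b t) a c ↔
        φ (Fin.snoc (Fin.snoc y b) a) * φ (Fin.snoc (Fin.snoc y b) c) < 0 :=
      sep_iff hsym (by simp only [Finset.mem_insert, not_or]; exact ⟨hab, ha'⟩)
        (by simp only [Finset.mem_insert, not_or]; exact ⟨Ne.symm hbc, hc'⟩)
        (snoc_inj hy (not_mem_range hby)) himb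
    set u := φ (Fin.snoc (Fin.snoc y a) b) with hu
    set v := φ (Fin.snoc (Fin.snoc y b) c) with hv
    set w := φ (Fin.snoc (Fin.snoc y a) c) with hw
    have e1 : φ (Fin.snoc (Fin.snoc y c) a) = w := snoc2_swap hsym hy hcy hay (Ne.symm hac)
    have e2 : φ (Fin.snoc (Fin.snoc y c) b) = v := snoc2_swap hsym hy hcy hby (Ne.symm hbc)
    have e3 : φ (Fin.snoc (Fin.snoc y b) a) = u := snoc2_swap hsym hy hby hay (Ne.symm hab)
    rw [e1, e2] at h1
    rw [e3] at h3
    have hnu : u ≠ 0 := hgen _ (snoc2_inj hy hay hby hab)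
    have hnv : v ≠ 0 := hgen _ (snoc2_inj hy hby hcy hbc)
    have hnw : w ≠ 0 := hgen _ (snoc2_inj hy hay hcy hac)
    have := parity3 u v w hnu hnv hnw
    simp only [h1, h2, h3]
    have hre : (if w * v < 0 then (1:ℕ) else 0) + (if u * w < 0 then 1 else 0)
        + (if u * v < 0 then 1 else 0)
        = (if u * v < 0 then 1 else 0) + (if v * w < 0 then (1:ℕ) else 0)
        + (if u * w < 0 then 1 else 0) := by
      rw [mul_comm w v]; ring
    rw [hre]
    exact this
  obtain ⟨k, hk⟩ := hAsum
  obtain ⟨m, hm⟩ := hBsum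
  omega
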